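/- arXiv:2109.00085 — 2 statements merged into one kernel-verified Lean document; each statement's English description precedes it below -/
import Mathlib

section
/- Let Z be a finite-dimensional complex normed space, B its open unit ball, and S ⊆ closure(B) a closed set such that sup{|f(z)| : z ∈ closure B} = sup{|f(z)| : z ∈ S} for all functions f holomorphic on B and continuous on closure(B). Suppose for each extreme point e of closure(B) there exists such a function h with ‖h‖_{closure B} = 1 and sup{|h(z)| : z ∈ closure B \ B(e,ε)} < 1 for all ε > 0. Then S contains all extreme points of closure(B). -/
theorem stmt_15 {Z : Type*} [NormedAddCommGroup Z] [NormedSpace ℂ Z]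
    [FiniteDimensional ℂ Z]
    (S : Set Z) (hSsub : S ⊆ Metric.closedBall (0 : Z) 1) (hSclosed : IsClosed S)
    (hdet : ∀ f : Z → ℂ, DifferentiableOn ℂ f (Metric.ball (0 : Z) 1) →
      ContinuousOn f (Metric.closedBall (0 : Z) 1) →
      sSup {r : ℝ | ∃ z ∈ Metric.closedBall (0 : Z) 1, r = ‖f z‖} =
        sSup {r : ℝ | ∃ z ∈ S, r = ‖f z‖})
    (hpeak : ∀ e ∈ Set.extremePoints ℝ (Metric.closedBall (0 : Z) 1),
      ∃ h : Z → ℂ, DifferentiableOn ℂ h (Metric.ball (0 : Z) 1) ∧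
        ContinuousOn h (Metric.closedBall (0 : Z) 1) ∧
        sSup {r : ℝ | ∃ z ∈ Metric.closedBall (0 : Z) 1, r = ‖h z‖} = 1 ∧
        ∀ ε > 0, sSup {r : ℝ |
          ∃ z ∈ Metric.closedBall (0 : Z) 1 \ Metric.ball e ε, r = ‖h z‖} < 1) :
    Set.extremePoints ℝ (Metric.closedBall (0 : Z) 1) ⊆ S := by
  intro e he
  by_contra heS
  obtain ⟨ε, hε, hball⟩ := Metric.isOpen_iff.mp hSclosed.isOpen_compl e heS
  obtain ⟨h, hdiff, hcont, hsup1, hlt⟩ := hpeak e he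
  have hSset : sSup {r : ℝ | ∃ z ∈ S, r = ‖h z‖} = 1 := by
    rw [← hdet h hdiff hcont, hsup1]
  rcases S.eq_empty_or_nonempty with hS | ⟨s, hs⟩
  · simp [hS, Real.sSup_empty] at hSset
  · have hlt' := hlt ε hε
    -- the deleted set is bounded above
    have hK : IsCompact (Metric.closedBall (0 : Z) 1) := isCompact_closedBall 0 1
    have hbdd : BddAbove {r : ℝ |
        ∃ z ∈ Metric.closedBall (0 : Z) 1 \ Metric.ball e ε, r = ‖h z‖} := by
      have himg : BddAbove ((fun z => ‖h z‖) '' Metric.closedBall (0 : Z) 1) :=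
        (hK.image_of_continuousOn hcont.norm).bddAbove
      refine himg.mono ?_
      rintro r ⟨z, ⟨hz1, _⟩, rfl⟩
      exact ⟨z, hz1, rfl⟩
    have hsub : {r : ℝ | ∃ z ∈ S, r = ‖h z‖} ⊆
        {r : ℝ | ∃ z ∈ Metric.closedBall (0 : Z) 1 \ Metric.ball e ε, r = ‖h z‖} := by
      rintro r ⟨z, hzS, rfl⟩
      refine ⟨z, ⟨hSsub hzS, fun hzb => ?_⟩, rfl⟩
      exact hball hzb hzS
    have : sSup {r : ℝ | ∃ z ∈ S, r = ‖h z‖} ≤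
        sSup {r : ℝ | ∃ z ∈ Metric.closedBall (0 : Z) 1 \ Metric.ball e ε, r = ‖h z‖} :=
      csSup_le_csSup hbdd ⟨‖h s‖, s, hs, rfl⟩ hsub
    linarith [hSset ▸ this]
end

section
/- Let X, Y be complex Banach spaces, D ⊆ X a domain, M > 0, and (f_n) a sequence in the set F_M = {f : D → Y holomorphic, sup_D ‖f‖ ≤ M}. If Y is finite dimensional, then (f_n) has a subnet converging uniformly on compact subsets of D to a holomorphic function f : D → Y with sup_D ‖f‖ ≤ M. -/
open Metric Complex Filter
open scoped NNReal ENNReal Topology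

-- coefficient bound
private lemma coeff_bound {Y : Type*} [NormedAddCommGroup Y] [NormedSpace ℂ Y]
    {g : ℂ → Y} {R M : ℝ} (hR : 0 < R) (hg : ContinuousOn g (Metric.closedBall 0 R))
    (hb : ∀ z ∈ Metric.closedBall (0:ℂ) R, ‖g z‖ ≤ M) (n : ℕ) :
    ‖cauchyPowerSeries g 0 R n‖ ≤ M / R ^ n := by
  have hcont : ContinuousOn (fun θ : ℝ => ‖g (circleMap 0 R θ)‖)
      (Set.uIcc 0 (2 * Real.pi)) := by
    apply (hg.comp ((continuous_circleMap 0 R).continuousOn) ?_).norm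
    intro θ _
    have := circleMap_mem_sphere (0:ℂ) hR.le θ
    exact sphere_subset_closedBall this
  have hint : (∫ θ : ℝ in (0)..(2*Real.pi), ‖g (circleMap 0 R θ)‖) ≤ 2 * Real.pi * M := by
    have : (∫ θ : ℝ in (0)..(2*Real.pi), ‖g (circleMap 0 R θ)‖)
        ≤ ∫ _ : ℝ in (0)..(2*Real.pi), M := by
      apply intervalIntegral.integral_mono_on Real.two_pi_pos.le
        (hcont.intervalIntegrable) intervalIntegrable_const
      intro θ _
      exact hb _ (sphere_subset_closedBall (circleMap_mem_sphere (0:ℂ) hR.le θ))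
    simpa [mul_comm] using this
  calc ‖cauchyPowerSeries g 0 R n‖
      ≤ ((2 * Real.pi)⁻¹ * ∫ θ : ℝ in (0)..(2*Real.pi), ‖g (circleMap 0 R θ)‖) * |R|⁻¹ ^ n :=
        norm_cauchyPowerSeries_le g 0 R n
    _ ≤ ((2 * Real.pi)⁻¹ * (2 * Real.pi * M)) * |R|⁻¹ ^ n := by
        have hM0 : 0 ≤ M := le_trans (norm_nonneg _) (hb 0 (by simp [hR.le]))
        gcongr
    _ = M / R ^ n := by
        rw [abs_of_pos hR, inv_pow]
        rw [← mul_assoc, inv_mul_cancel₀ (by positivity : (2*Real.pi:ℝ) ≠ 0), one_mul, div_eq_mul_inv]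

private lemma key1 {Y : Type*} [NormedAddCommGroup Y] [NormedSpace ℂ Y] [CompleteSpace Y]
    {g : ℂ → Y} {R M : ℝ} (hR : 0 < R)
    (hg : DifferentiableOn ℂ g (Metric.closedBall 0 R))
    (hb : ∀ z ∈ Metric.closedBall (0:ℂ) R, ‖g z‖ ≤ M) {z : ℂ} (hz : ‖z‖ ≤ R / 2) :
    ‖deriv g 0‖ ≤ M / R ∧
      ‖g z - g 0 - z • deriv g 0‖ ≤ 2 * M / R ^ 2 * ‖z‖ ^ 2 := by
  have hcoe : ((R.toNNReal : ℝ≥0) : ℝ) = R := Real.coe_toNNReal _ hR.le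
  have hR' : 0 < R.toNNReal := by rw [← NNReal.coe_lt_coe, hcoe]; exact hR
  have hp : HasFPowerSeriesOnBall g (cauchyPowerSeries g 0 R) 0 R.toNNReal := by
    have := DifferentiableOn.hasFPowerSeriesOnBall (R := R.toNNReal) (c := 0) (f := g)
      (by rw [hcoe]; exact hg) hR'
    rwa [hcoe] at this
  set p := cauchyPowerSeries g 0 R with hpdef
  have hcoeff : ∀ n, ‖p n‖ ≤ M / R ^ n := coeff_bound hR hg.continuousOn hb
  have hM0 : 0 ≤ M := le_trans (norm_nonneg _) (hb 0 (by simp [hR.le]))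
  have hderiv : deriv g 0 = p.coeff 1 := hp.hasFPowerSeriesAt.deriv
  constructor
  · rw [hderiv]
    calc ‖p.coeff 1‖ ≤ ‖p 1‖ := by
          simpa using (p 1).le_opNorm (fun _ => 1)
      _ ≤ M / R ^ 1 := hcoeff 1
      _ = M / R := by ring
  have hzball : z ∈ Metric.eball (0 : ℂ) R.toNNReal := by
    rw [Metric.mem_eball, edist_zero_right]
    have h1 : ‖z‖₊ < R.toNNReal := by
      rw [← NNReal.coe_lt_coe, coe_nnnorm, hcoe]; linarith
    exact_mod_cast ENNReal.coe_lt_coe.2 h1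
  have hs : HasSum (fun n => p n fun _ => z) (g z) := by
    simpa using hp.hasSum hzball
  have hs2 : HasSum (fun n => p (n + 2) fun _ => z)
      (g z - ∑ i ∈ Finset.range 2, p i fun _ => z) :=
    (hasSum_nat_add_iff' 2).2 hs
  have hsum2 : (∑ i ∈ Finset.range 2, p i fun _ => z) = g 0 + z • deriv g 0 := by
    rw [Finset.sum_range_succ, Finset.sum_range_one]
    rw [p.apply_eq_pow_smul_coeff, p.apply_eq_pow_smul_coeff, hderiv]
    rw [show p.coeff 0 = g 0 from hp.coeff_zero _]
    simp
  have hq : ‖z‖ / R ≤ 1 / 2 := by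
    rw [div_le_div_iff₀ hR (by norm_num)]; linarith
  have hmaj : ∀ n : ℕ, ‖p (n + 2) fun _ => z‖ ≤ (M / R ^ 2 * ‖z‖ ^ 2) * (1/2) ^ n := by
    intro n
    calc ‖p (n + 2) fun _ => z‖ ≤ ‖p (n + 2)‖ * ‖z‖ ^ (n + 2) := by
          simpa using (p (n+2)).le_opNorm (fun _ => z)
      _ ≤ M / R ^ (n + 2) * ‖z‖ ^ (n + 2) := by gcongr; exact hcoeff (n+2)
      _ = (M / R ^ 2 * ‖z‖ ^ 2) * (‖z‖ / R) ^ n := by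
          rw [div_pow, pow_add, pow_add]
          field_simp
      _ ≤ (M / R ^ 2 * ‖z‖ ^ 2) * (1/2) ^ n :=
          mul_le_mul_of_nonneg_left (pow_le_pow_left₀ (by positivity) hq n) (by positivity)
  have hmaj_summable : Summable (fun n : ℕ => (M / R ^ 2 * ‖z‖ ^ 2) * (1/2 : ℝ) ^ n) :=
    (summable_geometric_of_lt_one (by norm_num) (by norm_num)).mul_left _
  have hbound : ‖g z - (g 0 + z • deriv g 0)‖ ≤ 2 * M / R ^ 2 * ‖z‖ ^ 2 := by
    rw [← hsum2]
    calc ‖g z - ∑ i ∈ Finset.range 2, p i fun _ => z‖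
        ≤ ∑' n : ℕ, ((M / R ^ 2 * ‖z‖ ^ 2) * (1/2 : ℝ) ^ n) :=
          hs2.norm_le_of_bounded hmaj_summable.hasSum hmaj
      _ = (M / R ^ 2 * ‖z‖ ^ 2) * (1 - 1/2)⁻¹ := by
          rw [tsum_mul_left, tsum_geometric_of_lt_one (by norm_num) (by norm_num)]
      _ ≤ 2 * M / R ^ 2 * ‖z‖ ^ 2 := by
          rw [show ((1:ℝ) - 1/2)⁻¹ = 2 by norm_num]
          apply le_of_eq; ring
  simpa [sub_sub] using hbound

private lemma key2 {X : Type*} [NormedAddCommGroup X] [NormedSpace ℂ X]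
    {Y : Type*} [NormedAddCommGroup Y] [NormedSpace ℂ Y] [CompleteSpace Y]
    {D : Set X} (hDopen : IsOpen D) {f : X → Y} {M : ℝ}
    (hf : DifferentiableOn ℂ f D) (hb : ∀ x ∈ D, ‖f x‖ ≤ M)
    {x₀ : X} {R : ℝ} (hR : 0 < R) (hball : Metric.closedBall x₀ R ⊆ D) {h : X} :
    (‖fderiv ℂ f x₀ h‖ ≤ 2 * M / R * ‖h‖) ∧
    (‖h‖ ≤ R / 4 → ‖f (x₀ + h) - f x₀ - fderiv ℂ f x₀ h‖ ≤ 8 * M / R ^ 2 * ‖h‖ ^ 2) := by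
  have hx₀ : x₀ ∈ D := hball (mem_closedBall_self hR.le)
  have hM0 : 0 ≤ M := le_trans (norm_nonneg _) (hb x₀ hx₀)
  rcases eq_or_ne h 0 with rfl | hh0
  · constructor
    · simp
    · intro _; simp
  have hh : 0 < ‖h‖ := norm_pos_iff.2 hh0
  set ρ : ℝ := R / (2 * ‖h‖) with hρdef
  have hρ : 0 < ρ := by positivity
  set g : ℂ → Y := fun z => f (x₀ + z • h) with hgdef
  -- the affine map sends closedBall 0 ρ into closedBall x₀ (R/2) ⊆ D
  have hmaps : ∀ z : ℂ, z ∈ Metric.closedBall (0:ℂ) ρ → x₀ + z • h ∈ D := by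
    intro z hz
    apply hball
    rw [mem_closedBall] at hz ⊢
    rw [dist_zero_right] at hz
    rw [dist_self_add_left, norm_smul]
    calc ‖z‖ * ‖h‖ ≤ ρ * ‖h‖ := by gcongr
      _ = R / 2 := by rw [hρdef]; field_simp
      _ ≤ R := by linarith
  have haff : ∀ z : ℂ, HasDerivAt (fun w : ℂ => x₀ + w • h) h z := by
    intro z
    simpa using ((hasDerivAt_id z).smul_const h).const_add x₀
  have hgdiff : DifferentiableOn ℂ g (Metric.closedBall 0 ρ) := by
    intro z hz
    have : DifferentiableAt ℂ g z := by
      apply DifferentiableAt.comp (g := f) z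
      · exact (hf.differentiableAt (hDopen.mem_nhds (hmaps z hz)))
      · exact (haff z).differentiableAt
    exact this.differentiableWithinAt
  have hgb : ∀ z ∈ Metric.closedBall (0:ℂ) ρ, ‖g z‖ ≤ M := fun z hz => hb _ (hmaps z hz)
  -- deriv g 0 = fderiv f x₀ h
  have hfd : HasFDerivAt f (fderiv ℂ f x₀) x₀ :=
    (hf.differentiableAt (hDopen.mem_nhds hx₀)).hasFDerivAt
  have hgderiv : HasDerivAt g (fderiv ℂ f x₀ h) 0 := by
    have hfd' : HasFDerivAt f (fderiv ℂ f x₀) ((0:ℂ) • h + x₀) := by simpa using hfd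
    have := HasFDerivAt.comp_hasDerivAt (0:ℂ) (by simpa using hfd) (haff 0)
    exact this
  have hgd0 : deriv g 0 = fderiv ℂ f x₀ h := hgderiv.deriv
  constructor
  · -- derivative bound
    have := (key1 hρ hgdiff hgb (z := 0) (by simp; positivity)).1
    rw [hgd0] at this
    calc ‖fderiv ℂ f x₀ h‖ ≤ M / ρ := this
      _ = 2 * M / R * ‖h‖ := by rw [hρdef]; field_simp
  · intro hhR
    have h1 : ‖(1:ℂ)‖ ≤ ρ / 2 := by
      rw [norm_one, hρdef, le_div_iff₀ (by norm_num)]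
      rw [le_div_iff₀ (by positivity)]
      linarith
    have := (key1 hρ hgdiff hgb h1).2
    rw [hgd0] at this
    have hg1 : g 1 = f (x₀ + h) := by simp [hgdef]
    have hg0 : g 0 = f x₀ := by simp [hgdef]
    rw [hg1, hg0, one_smul, norm_one] at this
    calc ‖f (x₀ + h) - f x₀ - fderiv ℂ f x₀ h‖ ≤ 2 * M / ρ ^ 2 * 1 ^ 2 := this
      _ = 8 * M / R ^ 2 * ‖h‖ ^ 2 := by rw [hρdef]; field_simp; ring

-- ultrafilter limit of a bounded sequence in a finite-dimensional space
private lemma ulim {Y : Type*} [NormedAddCommGroup Y] [NormedSpace ℂ Y] [FiniteDimensional ℂ Y]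
    (U : Ultrafilter ℕ) {u : ℕ → Y} {C : ℝ} (hb : ∀ n, ‖u n‖ ≤ C) :
    ∃ y, Filter.Tendsto u ↑U (nhds y) := by
  obtain ⟨y, -, hy⟩ := (isCompact_closedBall (0:Y) C).ultrafilter_le_nhds (U.map u)
    (by rw [Ultrafilter.coe_map, Filter.le_principal_iff, Filter.mem_map]
        exact Filter.univ_mem' fun n => by
          simpa [mem_closedBall, dist_zero_right] using hb n)
  exact ⟨y, hy⟩

theorem stmt_16 {X : Type*} [NormedAddCommGroup X] [NormedSpace ℂ X] [CompleteSpace X]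
    {Y : Type*} [NormedAddCommGroup Y] [NormedSpace ℂ Y] [CompleteSpace Y]
    [FiniteDimensional ℂ Y]
    (D : Set X) (hDopen : IsOpen D) (hDconn : IsConnected D)
    (M : ℝ) (hM : 0 < M) (fn : ℕ → X → Y)
    (hfn : ∀ n, DifferentiableOn ℂ (fn n) D ∧ ∀ x ∈ D, ‖fn n x‖ ≤ M) :
    ∃ (ι : Type) (L : Filter ι), L.NeBot ∧ ∃ φ : ι → ℕ,
      Filter.Tendsto φ L Filter.atTop ∧ ∃ f : X → Y,
        DifferentiableOn ℂ f D ∧ (∀ x ∈ D, ‖f x‖ ≤ M) ∧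
        ∀ K ⊆ D, IsCompact K →
          TendstoUniformlyOn (fun i => fn (φ i)) f L K := by
  classical
  have hdiff : ∀ n, DifferentiableOn ℂ (fn n) D := fun n => (hfn n).1
  have hbb : ∀ n, ∀ x ∈ D, ‖fn n x‖ ≤ M := fun n => (hfn n).2
  set U : Ultrafilter ℕ := Ultrafilter.of Filter.atTop with hUdef
  have hU : (U : Filter ℕ) ≤ Filter.atTop := Ultrafilter.of_le _
  -- radius selection
  have hrad : ∀ x ∈ D, ∃ R : ℝ, 0 < R ∧ Metric.closedBall x R ⊆ D := by
    intro x hx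
    obtain ⟨ε, hε, hball⟩ := Metric.isOpen_iff.1 hDopen x hx
    exact ⟨ε/2, by positivity, le_trans (Metric.closedBall_subset_ball (by linarith)) hball⟩
  -- pointwise limits
  have hex : ∀ x : X, ∃ y, x ∈ D → Filter.Tendsto (fun n => fn n x) ↑U (nhds y) := by
    intro x
    by_cases hx : x ∈ D
    · obtain ⟨y, hy⟩ := ulim U (fun n => hbb n x hx)
      exact ⟨y, fun _ => hy⟩
    · exact ⟨0, fun hx' => absurd hx' hx⟩
  choose f hf using hex
  have hfl : ∀ x ∈ D, Filter.Tendsto (fun n => fn n x) ↑U (nhds (f x)) := fun x hx => hf x hx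
  have hfb : ∀ x ∈ D, ‖f x‖ ≤ M := fun x hx =>
    le_of_tendsto (hfl x hx).norm (Filter.Eventually.of_forall fun n => hbb n x hx)
  -- differentiability of the limit
  have hfd : DifferentiableOn ℂ f D := by
    intro x₀ hx₀
    obtain ⟨R, hR, hball⟩ := hrad x₀ hx₀
    have hA : ∀ h : X, ∃ y, Filter.Tendsto (fun n => fderiv ℂ (fn n) x₀ h) ↑U (nhds y) :=
      fun h => ulim U (fun n => (key2 hDopen (hdiff n) (hbb n) hR hball).1)
    choose A hA using hA
    have hadd : ∀ a b, A (a + b) = A a + A b := by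
      intro a b
      refine tendsto_nhds_unique ?_ ((hA a).add (hA b))
      simpa only [map_add] using hA (a + b)
    have hsmul : ∀ (c : ℂ) (a : X), A (c • a) = c • A a := by
      intro c a
      refine tendsto_nhds_unique ?_ ((hA a).const_smul c)
      simpa only [map_smul] using hA (c • a)
    have hAb : ∀ h, ‖A h‖ ≤ 2 * M / R * ‖h‖ := fun h =>
      le_of_tendsto (hA h).norm
        (Filter.Eventually.of_forall fun n => (key2 hDopen (hdiff n) (hbb n) hR hball).1)
    set A' : X →L[ℂ] Y := LinearMap.mkContinuous
      { toFun := A, map_add' := hadd, map_smul' := hsmul } (2 * M / R) hAb with hA'def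
    have hq : ∀ h : X, ‖h‖ ≤ R / 4 →
        ‖f (x₀ + h) - f x₀ - A h‖ ≤ 8 * M / R ^ 2 * ‖h‖ ^ 2 := by
      intro h hh
      have hxh : x₀ + h ∈ D := by
        apply hball
        rw [mem_closedBall, dist_self_add_left]
        linarith
      have ht : Filter.Tendsto (fun n => fn n (x₀ + h) - fn n x₀ - fderiv ℂ (fn n) x₀ h) ↑U
          (nhds (f (x₀ + h) - f x₀ - A h)) := ((hfl _ hxh).sub (hfl _ hx₀)).sub (hA h)
      exact le_of_tendsto ht.norm
        (Filter.Eventually.of_forall fun n => (key2 hDopen (hdiff n) (hbb n) hR hball).2 hh)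
    have hder : HasFDerivAt f A' x₀ := by
      rw [hasFDerivAt_iff_isLittleO_nhds_zero, Asymptotics.isLittleO_iff]
      intro c hc
      set C : ℝ := 8 * M / R ^ 2 with hCdef
      have hC : 0 < C := by rw [hCdef]; positivity
      filter_upwards [Metric.closedBall_mem_nhds (0:X)
        (show (0:ℝ) < min (R/4) (c/C) by positivity)] with h hh
      rw [mem_closedBall, dist_zero_right] at hh
      have h1 : ‖h‖ ≤ R / 4 := le_trans hh (min_le_left _ _)
      have h2 : ‖h‖ ≤ c / C := le_trans hh (min_le_right _ _)
      have hAA : A' h = A h := rfl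
      calc ‖f (x₀ + h) - f x₀ - A' h‖ ≤ C * ‖h‖ ^ 2 := by rw [hAA]; exact hq h h1
        _ = C * ‖h‖ * ‖h‖ := by ring
        _ ≤ C * (c / C) * ‖h‖ := by gcongr
        _ = c * ‖h‖ := by field_simp
    exact hder.differentiableAt.differentiableWithinAt
  refine ⟨ℕ, ↑U, U.neBot, id, by rwa [Filter.tendsto_id'], f, hfd, hfb, ?_⟩
  -- uniform convergence on compacts
  intro K hKD hK
  -- Lipschitz estimate around each point gives equicontinuity
  have heq : EquicontinuousOn (fun n => fn n) K := by
    intro x hx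
    obtain ⟨R, hR, hball⟩ := hrad x (hKD hx)
    have hlip : ∀ n, ∀ y : X, ‖y - x‖ ≤ R / 4 → ‖fn n y - fn n x‖ ≤ 4 * M / R * ‖y - x‖ := by
      intro n y hy
      have hk := key2 (h := y - x) hDopen (hdiff n) (hbb n) hR hball
      have hfx : fn n y - fn n x =
          (fn n (x + (y - x)) - fn n x - fderiv ℂ (fn n) x (y - x)) +
            fderiv ℂ (fn n) x (y - x) := by
        rw [add_sub_cancel]; abel
      rw [hfx]
      calc ‖_ + _‖ ≤ 8 * M / R ^ 2 * ‖y - x‖ ^ 2 + 2 * M / R * ‖y - x‖ :=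
            norm_add_le_of_le (hk.2 hy) hk.1
        _ ≤ 2 * M / R * ‖y - x‖ + 2 * M / R * ‖y - x‖ := by
            have h8 : 8 * M / R ^ 2 * ‖y - x‖ ^ 2 ≤ 2 * M / R * ‖y - x‖ := by
              calc 8 * M / R ^ 2 * ‖y - x‖ ^ 2
                  = (8 * M / R ^ 2 * ‖y - x‖) * ‖y - x‖ := by ring
                _ ≤ (8 * M / R ^ 2 * (R / 4)) * ‖y - x‖ := by
                    gcongr
                _ = 2 * M / R * ‖y - x‖ := by
                    congr 1
                    field_simp
                    ring
            exact add_le_add_left h8 _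
        _ = 4 * M / R * ‖y - x‖ := by ring
    -- equicontinuity within K at x
    intro V hV
    obtain ⟨ε, hε, hVε⟩ := Metric.mem_uniformity_dist.1 hV
    have hδ : (0:ℝ) < min (R/4) (ε / (4*M/R + 1)) := by positivity
    have hev : ∀ᶠ y in 𝓝 x, dist y x < min (R/4) (ε / (4*M/R + 1)) := by
      have := Metric.ball_mem_nhds x hδ
      filter_upwards [this] with y hy using by rwa [mem_ball] at hy
    apply Filter.Eventually.filter_mono nhdsWithin_le_nhds
    filter_upwards [hev] with y hy n
    apply hVε
    rw [dist_eq_norm]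
    have hyx : ‖y - x‖ < min (R/4) (ε / (4*M/R + 1)) := by rwa [← dist_eq_norm]
    calc ‖fn n x - fn n y‖ = ‖fn n y - fn n x‖ := norm_sub_rev _ _
      _ ≤ 4 * M / R * ‖y - x‖ := hlip n y (le_of_lt (lt_of_lt_of_le hyx (min_le_left _ _)))
      _ ≤ (4 * M / R + 1) * ‖y - x‖ := by
          apply mul_le_mul_of_nonneg_right (by linarith) (norm_nonneg _)
      _ < (4 * M / R + 1) * (ε / (4*M/R + 1)) := by
          apply mul_lt_mul_of_pos_left (lt_of_lt_of_le hyx (min_le_right _ _)) (by positivity)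
      _ = ε := by field_simp
  -- pointwise convergence on K + equicontinuity ⇒ uniform convergence
  have hpt : Filter.Tendsto ((⋃₀ ({K} : Set (Set X))).domRestrict ∘ (fun n => fn n)) ↑U
      (nhds ((⋃₀ ({K} : Set (Set X))).domRestrict f)) := by
    rw [tendsto_pi_nhds]
    intro z
    have hz : (z : X) ∈ K := by simpa using z.2
    exact hfl _ (hKD hz)
  have key := (EquicontinuousOn.tendsto_uniformOnFun_iff_pi' (X := X) (α := Y)
    (𝔖 := {K}) (fun K' hK' => by rw [Set.mem_singleton_iff] at hK'; rwa [hK'])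
    (fun K' hK' => by rw [Set.mem_singleton_iff] at hK'; rwa [hK']) ↑U f).2 hpt
  rw [UniformOnFun.tendsto_iff_tendstoUniformlyOn] at key
  have := key K rfl
  exact this
end
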